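/- Let X be a type with a well-founded strict order <. For all words w₁ and w₂ over X, |w₁ ++ w₂| = |w₁| + |w₂^{(w₁)}|, where w₂^{(w₁)} is the word obtained from w₂ by deleting every letter that is strictly smaller than some letter of w₁. -/

import Mathlib

open Classical in
/-- The lexicographic maximum measure of a word of labels: `|ε| = ∅` and
`|k·w| = {k} + |w'|`, where `w'` is obtained from `w` by deleting every letter
strictly smaller than `k`. -/
noncomputable def lmMeasure {X : Type*} [Preorder X] : List X → Multiset X
  | [] => 0
  | k :: w => {k} + lmMeasure (w.filter (fun x => decide (¬ x < k)))
termination_by w => w.length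
decreasing_by
  simp
  exact (List.length_filter_le _ _).trans (by simp)

/-- The Dershowitz–Manna multiset extension of the strict order on `X`. -/
def DMLT {X : Type*} [Preorder X] (M N : Multiset X) : Prop :=
  ∃ M₁ M₂ M₃ : Multiset X, M = M₁ + M₂ ∧ N = M₁ + M₃ ∧ M₃ ≠ 0 ∧
    ∀ x ∈ M₂, ∃ y ∈ M₃, x < y

/-- The reflexive closure of the Dershowitz–Manna multiset extension. -/
def DMLE {X : Type*} [Preorder X] (M N : Multiset X) : Prop :=
  M = N ∨ DMLT M N

open Classical in
/-- `delBelow w' w` is the word obtained from `w` by deleting every letter that is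
strictly smaller than some letter of `w'`. -/
noncomputable def delBelow {X : Type*} [Preorder X] (w' w : List X) : List X :=
  w.filter (fun x => decide (¬ ∃ y ∈ w', x < y))

/-- The measure of a concatenation: `|w₁ ++ w₂| = |w₁| + |w₂^{(w₁)}|`, where
`w₂^{(w₁)}` deletes from `w₂` every letter strictly smaller than some letter of `w₁`. -/
theorem lmMeasure_append
    {X : Type*} [Preorder X]
    (hwf : WellFounded ((· < ·) : X → X → Prop))
    (w₁ w₂ : List X) :
    lmMeasure (w₁ ++ w₂) = lmMeasure w₁ + lmMeasure (delBelow w₁ w₂) := by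
  have key : ∀ n (w₁ : List X), w₁.length ≤ n → ∀ w₂ : List X,
      lmMeasure (w₁ ++ w₂) = lmMeasure w₁ + lmMeasure (delBelow w₁ w₂) := by
    intro n
    induction n with
    | zero =>
      intro w₁ h w₂
      rw [List.length_eq_zero_iff.mp (Nat.le_zero.mp h)]
      simp [lmMeasure, delBelow]
    | succ n ih =>
      intro w₁ h w₂
      match w₁ with
      | [] => simp [lmMeasure, delBelow]
      | k :: w =>
        rw [List.cons_append, lmMeasure, lmMeasure, List.filter_append,
          ih _ (le_trans (List.length_filter_le _ _) (Nat.succ_le_succ_iff.mp h)),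
          add_assoc]
        congr 2
        unfold delBelow
        rw [List.filter_filter]
        congr 1
        apply List.filter_congr
        intro x _
        rw [Bool.eq_iff_iff]
        simp only [Bool.and_eq_true, decide_eq_true_eq, List.mem_filter, List.mem_cons]
        constructor
        · rintro ⟨h2, h1⟩ ⟨y, hy, hxy⟩
          rcases hy with rfl | hy
          · exact h1 hxy
          · by_cases hyk : y < k
            · exact h1 (lt_trans hxy hyk)
            · exact h2 ⟨y, ⟨hy, hyk⟩, hxy⟩
        · intro hne
          refine ⟨?_, fun hxk => hne ⟨k, Or.inl rfl, hxk⟩⟩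
          rintro ⟨y, ⟨hy, _⟩, hxy⟩
          exact hne ⟨y, Or.inr hy, hxy⟩
  exact key w₁.length w₁ le_rfl w₂
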